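/- For I_{n,l} ⊆ K[x₁,…,xₙ] the ideal generated by all squarefree monomials of degree l, one has the primary decomposition I_{n,l} = ⋂ (x_{i₁},…,x_{i_{n−l+1}}) over all (n−l+1)-element subsets {i₁,…,i_{n−l+1}} of [n]. -/

import Mathlib

open Finset MvPolynomial

/-- The squarefree Veronese ideal `I_{n,l}`, generated by all squarefree monomials of
degree `l` in `K[x₁,…,xₙ]`, has the primary decomposition
`I_{n,l} = ⋂ (x_{i₁},…,x_{i_{n−l+1}})` over all `(n−l+1)`-element subsets of `[n]`. -/
theorem stmt15 (K : Type*) [Field K] (n l : ℕ) (hl : 1 ≤ l) (hln : l ≤ n) :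
    Ideal.span {p : MvPolynomial (Fin n) K |
        ∃ τ : Finset (Fin n), τ.card = l ∧ p = ∏ i ∈ τ, X i} =
      ⨅ C ∈ (Finset.univ : Finset (Fin n)).powersetCard (n - l + 1),
        Ideal.span ((fun i => (X i : MvPolynomial (Fin n) K)) '' C) := by
  have hgen : {p : MvPolynomial (Fin n) K |
        ∃ τ : Finset (Fin n), τ.card = l ∧ p = ∏ i ∈ τ, X i} =
      (fun d => monomial d (1 : K)) ''
        {d | ∃ τ : Finset (Fin n), τ.card = l ∧ d = ∑ i ∈ τ, Finsupp.single i 1} := by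
    ext p
    constructor
    · rintro ⟨τ, hτ, rfl⟩
      exact ⟨∑ i ∈ τ, Finsupp.single i 1, ⟨τ, hτ, rfl⟩,
        by show (monomial _) 1 = _; rw [monomial_sum_one]; rfl⟩
    · rintro ⟨d, ⟨τ, hτ, rfl⟩, rfl⟩
      exact ⟨τ, hτ, by show (monomial _) 1 = _; rw [monomial_sum_one]; rfl⟩
  apply le_antisymm
  · rw [Ideal.span_le]
    rintro p ⟨τ, hτ, rfl⟩
    simp only [Ideal.mem_iInf, SetLike.mem_coe]
    intro C hC
    rw [Finset.mem_powersetCard_univ] at hC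
    have hne : (τ ∩ C).Nonempty := by
      rw [← Finset.card_pos]
      by_contra h
      push_neg at h
      have h0 : (τ ∩ C).card = 0 := Nat.le_zero.mp h
      have := Finset.card_union_add_card_inter τ C
      rw [h0, add_zero, hτ, hC] at this
      have hle := Finset.card_le_univ (τ ∪ C)
      rw [this] at hle
      simp only [Finset.card_univ, Fintype.card_fin] at hle
      omega
    obtain ⟨i, hi⟩ := hne
    rw [Finset.mem_inter] at hi
    rw [← Finset.mul_prod_erase τ _ hi.1]
    exact Ideal.mul_mem_right _ _ (Ideal.subset_span ⟨i, hi.2, rfl⟩)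
  · intro p hp
    rw [hgen, mem_ideal_span_monomial_image]
    intro m hm
    simp only [Ideal.mem_iInf] at hp
    have hsupp : l ≤ m.support.card := by
      by_contra h
      push_neg at h
      have hcompl : n - l + 1 ≤ m.supportᶜ.card := by
        rw [Finset.card_compl]
        simp only [Fintype.card_fin]
        omega
      obtain ⟨C, hCsub, hCcard⟩ := Finset.exists_subset_card_eq hcompl
      have := hp C (Finset.mem_powersetCard_univ.mpr hCcard)
      rw [mem_ideal_span_X_image] at this
      obtain ⟨i, hiC, hi⟩ := this m hm
      have := hCsub hiC
      rw [Finset.mem_compl, Finsupp.mem_support_iff] at this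
      exact this (by simpa using hi)
    obtain ⟨τ, hτsub, hτcard⟩ := Finset.exists_subset_card_eq hsupp
    refine ⟨∑ i ∈ τ, Finsupp.single i 1, ⟨τ, hτcard, rfl⟩, ?_⟩
    intro i
    rw [Finsupp.finset_sum_apply]
    by_cases hi : i ∈ τ
    · rw [Finset.sum_eq_single i (fun j _ hj => Finsupp.single_eq_of_ne' hj) (by simp [hi])]
      simp only [Finsupp.single_eq_same]
      have := hτsub hi
      rw [Finsupp.mem_support_iff] at this
      omega
    · rw [Finset.sum_eq_zero (fun j hj => Finsupp.single_eq_of_ne (by rintro rfl; exact hi hj))]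
      exact Nat.zero_le _
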